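/- Let 1/2 ≤ γ ≤ 1, N ∈ ℕ with N ≥ 1, h > 0, and let v, v̄ ∈ ℝ^N have strictly positive entries, with cyclic indices (v_{N+1} := v_1, v̄_{N+1} := v̄_1). Then (1/h)·Σ_{i=1}^N [(v_{i+1}^γ − v_i^γ)² − (v̄_{i+1}^γ − v̄_i^γ)²] ≤ (2γ/h)·Σ_{i=1}^N (v_{i+1}^γ − v_i^γ)·(v_{i+1}^{γ−1}(v_{i+1} − v̄_{i+1}) − v_i^{γ−1}(v_i − v̄_i)). -/

import Mathlib

open Finset Set

lemma quad_psd (γ a b α β : ℝ) (hγ1 : 1 / 2 ≤ γ) (hγ2 : γ ≤ 1)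
    (ha : 0 < a) (hb : 0 < b) :
    0 ≤ γ ^ 2 * (a * α - b * β) ^ 2 + γ * (γ - 1) * (a - b) * (a * α ^ 2 - b * β ^ 2) := by
  have hγ0 : 0 < γ := by linarith
  have hc1 : 0 < γ * a * ((2 * γ - 1) * a + (1 - γ) * b) := by
    have : 0 < (2 * γ - 1) * a + (1 - γ) * b := by
      rcases le_total a b with hab | hab <;> nlinarith
    positivity
  nlinarith [sq_nonneg (γ * a * ((2 * γ - 1) * a + (1 - γ) * b) * α - γ ^ 2 * a * b * β),
    mul_nonneg (mul_nonneg (mul_nonneg (mul_nonneg (mul_nonneg (sq_nonneg γ) ha.le) hb.le)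
      (by linarith : (0:ℝ) ≤ 2 * γ - 1)) (by linarith : (0:ℝ) ≤ 1 - γ))
      (mul_nonneg (sq_nonneg (a - b)) (sq_nonneg β)), hc1]

lemma key_pointwise (γ : ℝ) (hγ1 : 1 / 2 ≤ γ) (hγ2 : γ ≤ 1)
    (x y xb yb : ℝ) (hx : 0 < x) (hy : 0 < y) (hxb : 0 < xb) (hyb : 0 < yb) :
    (x ^ γ - y ^ γ) ^ 2 - (xb ^ γ - yb ^ γ) ^ 2
      ≤ 2 * γ * ((x ^ γ - y ^ γ) * (x ^ (γ - 1) * (x - xb) - y ^ (γ - 1) * (y - yb))) := by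
  set dx := xb - x with hdx
  set dy := yb - y with hdy
  set X : ℝ → ℝ := fun t => x + t * dx with hXdef
  set Y : ℝ → ℝ := fun t => y + t * dy with hYdef
  set S : Set ℝ := {t | 0 < X t ∧ 0 < Y t} with hSdef
  have hXcont : Continuous X := by fun_prop
  have hYcont : Continuous Y := by fun_prop
  have hSopen : IsOpen S := by
    have : S = X ⁻¹' (Ioi 0) ∩ Y ⁻¹' (Ioi 0) := rfl
    rw [this]
    exact (isOpen_Ioi.preimage hXcont).inter (isOpen_Ioi.preimage hYcont)
  have hSconv : Convex ℝ S := by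
    intro p hp q hq a b ha hb hab
    simp only [hSdef, hXdef, hYdef, Set.mem_setOf_eq, smul_eq_mul] at *
    constructor
    · rcases ha.lt_or_eq with ha' | ha'
      · nlinarith [mul_pos ha' hp.1, mul_nonneg hb hq.1.le]
      · nlinarith [hq.1]
    · rcases ha.lt_or_eq with ha' | ha'
      · nlinarith [mul_pos ha' hp.2, mul_nonneg hb hq.2.le]
      · nlinarith [hq.2]
  have hsub : Icc (0:ℝ) 1 ⊆ S := by
    intro t ht
    simp only [Set.mem_Icc] at ht
    constructor
    · show 0 < x + t * dx
      nlinarith [mul_nonneg (sub_nonneg.2 ht.2) hx.le, mul_nonneg ht.1 hxb.le,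
        mul_pos hx hxb]
    · show 0 < y + t * dy
      nlinarith [mul_nonneg (sub_nonneg.2 ht.2) hy.le, mul_nonneg ht.1 hyb.le,
        mul_pos hy hyb]
  set f : ℝ → ℝ := fun t => (X t ^ γ - Y t ^ γ) ^ 2 with hfdef
  set g : ℝ → ℝ := fun t =>
    2 * (X t ^ γ - Y t ^ γ) * (dx * γ * X t ^ (γ - 1) - dy * γ * Y t ^ (γ - 1)) with hgdef
  set g2 : ℝ → ℝ := fun t =>
    2 * (dx * γ * X t ^ (γ - 1) - dy * γ * Y t ^ (γ - 1)) ^ 2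
      + 2 * (X t ^ γ - Y t ^ γ) *
        (dx * (dx * (γ - 1) * X t ^ (γ - 2)) * γ - dy * (dy * (γ - 1) * Y t ^ (γ - 2)) * γ)
    with hg2def
  have hXd : ∀ t : ℝ, HasDerivAt X dx t := by
    intro t
    simpa [hXdef] using ((hasDerivAt_id t).mul_const dx).const_add x
  have hYd : ∀ t : ℝ, HasDerivAt Y dy t := by
    intro t
    simpa [hYdef] using ((hasDerivAt_id t).mul_const dy).const_add y
  have hf : ∀ t ∈ S, HasDerivAt f (g t) t := by
    intro t ht
    have hA : HasDerivAt (fun s => X s ^ γ) (dx * γ * X t ^ (γ - 1)) t :=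
      (hXd t).rpow_const (Or.inl ht.1.ne')
    have hB : HasDerivAt (fun s => Y s ^ γ) (dy * γ * Y t ^ (γ - 1)) t :=
      (hYd t).rpow_const (Or.inl ht.2.ne')
    have := (hA.sub hB).pow 2
    refine this.congr_deriv ?_
    simp only [hgdef, Pi.sub_apply]
    push_cast
    ring
  have hg : ∀ t ∈ S, HasDerivAt g (g2 t) t := by
    intro t ht
    have hA : HasDerivAt (fun s => X s ^ γ) (dx * γ * X t ^ (γ - 1)) t :=
      (hXd t).rpow_const (Or.inl ht.1.ne')
    have hB : HasDerivAt (fun s => Y s ^ γ) (dy * γ * Y t ^ (γ - 1)) t :=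
      (hYd t).rpow_const (Or.inl ht.2.ne')
    have hA1 : HasDerivAt (fun s => X s ^ (γ - 1)) (dx * (γ - 1) * X t ^ (γ - 1 - 1)) t :=
      (hXd t).rpow_const (Or.inl ht.1.ne')
    have hB1 : HasDerivAt (fun s => Y s ^ (γ - 1)) (dy * (γ - 1) * Y t ^ (γ - 1 - 1)) t :=
      (hYd t).rpow_const (Or.inl ht.2.ne')
    have hu : HasDerivAt (fun s => 2 * (X s ^ γ - Y s ^ γ))
        (2 * (dx * γ * X t ^ (γ - 1) - dy * γ * Y t ^ (γ - 1))) t := (hA.sub hB).const_mul 2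
    have hv : HasDerivAt (fun s => dx * γ * X s ^ (γ - 1) - dy * γ * Y s ^ (γ - 1))
        ((dx * γ) * (dx * (γ - 1) * X t ^ (γ - 1 - 1))
          - (dy * γ) * (dy * (γ - 1) * Y t ^ (γ - 1 - 1))) t :=
      (hA1.const_mul (dx * γ)).sub (hB1.const_mul (dy * γ))
    have := hu.mul hv
    refine this.congr_deriv ?_
    have e1 : γ - 1 - 1 = γ - 2 := by ring
    simp only [hg2def, e1]
    ring
  have hg2 : ∀ t ∈ S, 0 ≤ g2 t := by
    intro t ht
    have hXt := ht.1
    have hYt := ht.2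
    have ha := Real.rpow_pos_of_pos hXt γ
    have hb := Real.rpow_pos_of_pos hYt γ
    have e2 : (γ : ℝ) - 2 = γ - 1 - 1 := by ring
    have eX1 : X t ^ (γ - 1) = X t ^ γ / X t := by
      rw [Real.rpow_sub hXt, Real.rpow_one]
    have eY1 : Y t ^ (γ - 1) = Y t ^ γ / Y t := by
      rw [Real.rpow_sub hYt, Real.rpow_one]
    have eX2 : X t ^ (γ - 2) = X t ^ γ / X t / X t := by
      rw [e2, Real.rpow_sub hXt, Real.rpow_sub hXt, Real.rpow_one]
    have eY2 : Y t ^ (γ - 2) = Y t ^ γ / Y t / Y t := by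
      rw [e2, Real.rpow_sub hYt, Real.rpow_sub hYt, Real.rpow_one]
    have hq := quad_psd γ (X t ^ γ) (Y t ^ γ) (dx / X t) (dy / Y t) hγ1 hγ2 ha hb
    simp only [hg2def, eX1, eY1, eX2, eY2]
    ring_nf at hq ⊢
    linarith [hq]
  have hgmono : MonotoneOn g S := by
    have hint : interior S = S := hSopen.interior_eq
    apply monotoneOn_of_deriv_nonneg hSconv
    · exact fun t ht => (hg t ht).continuousAt.continuousWithinAt
    · rw [hint]; exact fun t ht => (hg t ht).differentiableAt.differentiableWithinAt
    · rw [hint]; intro t ht; rw [(hg t ht).deriv]; exact hg2 t ht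
  have hfc : ContinuousOn f (Icc 0 1) :=
    fun t ht => (hf t (hsub ht)).continuousAt.continuousWithinAt
  obtain ⟨c, hc, hceq⟩ := exists_hasDerivAt_eq_slope f g (by norm_num : (0:ℝ) < 1) hfc
    (fun t ht => hf t (hsub (Ioo_subset_Icc_self ht)))
  have h0S : (0:ℝ) ∈ S := hsub (by norm_num)
  have hcS : c ∈ S := hsub (Ioo_subset_Icc_self hc)
  have hmono := hgmono h0S hcS hc.1.le
  have hslope : g c = f 1 - f 0 := by rw [hceq]; norm_num
  have hkey : f 0 - f 1 ≤ - g 0 := by linarith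
  have hX0 : X 0 = x := by simp [hXdef]
  have hY0 : Y 0 = y := by simp [hYdef]
  have hX1 : X 1 = xb := by simp [hXdef, hdx]
  have hY1 : Y 1 = yb := by simp [hYdef, hdy]
  have hf0 : f 0 = (x ^ γ - y ^ γ) ^ 2 := by rw [hfdef]; simp [hX0, hY0]
  have hf1 : f 1 = (xb ^ γ - yb ^ γ) ^ 2 := by rw [hfdef]; simp [hX1, hY1]
  have hg0 : g 0 = 2 * (x ^ γ - y ^ γ) * (dx * γ * x ^ (γ - 1) - dy * γ * y ^ (γ - 1)) := by
    rw [hgdef]; simp [hX0, hY0]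
  rw [hf0, hf1, hg0] at hkey
  calc (x ^ γ - y ^ γ) ^ 2 - (xb ^ γ - yb ^ γ) ^ 2
      ≤ -(2 * (x ^ γ - y ^ γ) * (dx * γ * x ^ (γ - 1) - dy * γ * y ^ (γ - 1))) := hkey
    _ = 2 * γ * ((x ^ γ - y ^ γ) * (x ^ (γ - 1) * (x - xb) - y ^ (γ - 1) * (y - yb))) := by
        rw [hdx, hdy]; ring

/-- Concavity estimate: the difference of discrete Fisher informations is
bounded above by its linearization. -/
theorem fisher_difference_linearization
    (γ : ℝ) (hγ1 : 1 / 2 ≤ γ) (hγ2 : γ ≤ 1)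
    (N : ℕ) [NeZero N] (h : ℝ) (hh : 0 < h)
    (v vbar : Fin N → ℝ) (hv : ∀ i, 0 < v i) (hvbar : ∀ i, 0 < vbar i) :
    1 / h * ∑ i : Fin N,
        ((v (i + 1) ^ γ - v i ^ γ) ^ 2 - (vbar (i + 1) ^ γ - vbar i ^ γ) ^ 2)
      ≤ 2 * γ / h * ∑ i : Fin N,
          (v (i + 1) ^ γ - v i ^ γ) *
          (v (i + 1) ^ (γ - 1) * (v (i + 1) - vbar (i + 1))
            - v i ^ (γ - 1) * (v i - vbar i)) := by
  have hsum : ∑ i : Fin N,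
        ((v (i + 1) ^ γ - v i ^ γ) ^ 2 - (vbar (i + 1) ^ γ - vbar i ^ γ) ^ 2)
      ≤ ∑ i : Fin N, 2 * γ *
          ((v (i + 1) ^ γ - v i ^ γ) *
          (v (i + 1) ^ (γ - 1) * (v (i + 1) - vbar (i + 1))
            - v i ^ (γ - 1) * (v i - vbar i))) := by
    apply Finset.sum_le_sum
    intro i _
    exact key_pointwise γ hγ1 hγ2 (v (i + 1)) (v i) (vbar (i + 1)) (vbar i)
      (hv _) (hv _) (hvbar _) (hvbar _)
  have h1 : (0:ℝ) ≤ 1 / h := by positivity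
  calc 1 / h * ∑ i : Fin N,
        ((v (i + 1) ^ γ - v i ^ γ) ^ 2 - (vbar (i + 1) ^ γ - vbar i ^ γ) ^ 2)
      ≤ 1 / h * ∑ i : Fin N, 2 * γ *
          ((v (i + 1) ^ γ - v i ^ γ) *
          (v (i + 1) ^ (γ - 1) * (v (i + 1) - vbar (i + 1))
            - v i ^ (γ - 1) * (v i - vbar i))) := mul_le_mul_of_nonneg_left hsum h1
    _ = 2 * γ / h * ∑ i : Fin N,
          (v (i + 1) ^ γ - v i ^ γ) *
          (v (i + 1) ^ (γ - 1) * (v (i + 1) - vbar (i + 1))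
            - v i ^ (γ - 1) * (v i - vbar i)) := by
        rw [← Finset.mul_sum]
        ring
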